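/- Let D be a weakly self-orthogonal 1-design with block size k odd and all block intersection numbers even. Let G be an automorphism group acting with n point orbits of length w = 2^u·w' and m block orbits of lengths b_i = 2^o·b_i', with w', b_i' odd and o = u. Then the rows of the binary matrix [I_m | O], where O is the orbit matrix reduced mod 2, span a binary self-orthogonal code of length m + v/w and dimension m; if m = n the code is self-dual. -/

import Mathlib

open Matrix Finset

lemma aux_const {P B G : Type*} [Fintype B] [Group G] [MulAction G P] [MulAction G B]
    (Inc : B → P → Prop) [∀ x, DecidablePred (Inc x)]
    (hGInc : ∀ (g : G) (x : B) (pt : P), Inc x pt ↔ Inc (g • x) (g • pt))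
    (S : Finset B) (hS : ∃ x0, (S : Set B) = MulAction.orbit G x0)
    {pt pt' : P} (g : G) (h : pt' = g • pt) :
    (S.filter (fun x => Inc x pt)).card = (S.filter (fun x => Inc x pt')).card := by
  obtain ⟨x0, hx0⟩ := hS
  have hmem : ∀ (g' : G) (x : B), x ∈ S → g' • x ∈ S := by
    intro g' x hx
    have : x ∈ (S : Set B) := hx
    rw [hx0] at this
    obtain ⟨h', rfl⟩ := this
    have : (g' * h') • x0 ∈ (S : Set B) := by rw [hx0]; exact ⟨g' * h', rfl⟩
    simpa [mul_smul] using this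
  subst h
  refine Finset.card_bij' (fun x _ => g • x) (fun y _ => g⁻¹ • y) ?_ ?_ ?_ ?_
  · intro x hx
    simp only [Finset.mem_filter] at hx ⊢
    exact ⟨hmem g x hx.1, (hGInc g x pt).mp hx.2⟩
  · intro y hy
    simp only [Finset.mem_filter] at hy ⊢
    refine ⟨hmem g⁻¹ y hy.1, ?_⟩
    have := (hGInc g⁻¹ y (g • pt)).mp hy.2
    simpa using this
  · intro x _; simp
  · intro y _; simp

lemma aux_key {P B G : Type*} [Fintype P] [Fintype B] [Group G]
    [MulAction G P] [MulAction G B]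
    (Inc : B → P → Prop) [∀ x, DecidablePred (Inc x)]
    (hGInc : ∀ (g : G) (x : B) (pt : P), Inc x pt ↔ Inc (g • x) (g • pt))
    {n m w : ℕ} (Vo : Fin n → Finset P) (Bo : Fin m → Finset B) (bL : Fin m → ℕ)
    (hVo : ∀ j, ∃ pt, (Vo j : Set P) = MulAction.orbit G pt)
    (hVpart : ∀ pt : P, ∃! j, pt ∈ Vo j)
    (hVw : ∀ j, (Vo j).card = w)
    (hBo : ∀ i, ∃ x, (Bo i : Set B) = MulAction.orbit G x)
    (hBL : ∀ i, (Bo i).card = bL i)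
    (O : Matrix (Fin m) (Fin n) ℕ)
    (hO : ∀ i j, ∀ x ∈ Bo i, O i j = ((Vo j).filter (fun pt => Inc x pt)).card)
    (s t : Fin m) (x : B) (hx : x ∈ Bo s) :
    w * ∑ x' ∈ Bo t, (Finset.univ.filter (fun pt => Inc x pt ∧ Inc x' pt)).card
      = bL t * ∑ j, O s j * O t j := by
  classical
  set N : P → ℕ := fun pt => ((Bo t).filter (fun x' => Inc x' pt)).card with hN
  -- Step A: for pt ∈ Vo j, w * N pt = bL t * O t j
  have stepA : ∀ j : Fin n, ∀ pt ∈ Vo j, w * N pt = bL t * O t j := by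
    intro j pt hpt
    have hsum1 : ∑ pt' ∈ Vo j, N pt' = w * N pt := by
      rw [Finset.sum_congr rfl (fun pt' hpt' => ?_), Finset.sum_const, smul_eq_mul, hVw j]
      -- N pt' = N pt
      obtain ⟨q, hq⟩ := hVo j
      have h1 : pt ∈ MulAction.orbit G q := by rw [← hq]; exact hpt
      have h2 : pt' ∈ MulAction.orbit G q := by rw [← hq]; exact hpt'
      obtain ⟨g1, rfl⟩ := h1
      obtain ⟨g2, rfl⟩ := h2
      have : (g2 : G) • q = (g2 * g1⁻¹) • (g1 • q) := by
        simp [mul_smul]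
      exact (aux_const Inc hGInc (Bo t) (hBo t) (g2 * g1⁻¹) this).symm
    have hsum2 : ∑ pt' ∈ Vo j, N pt' = bL t * O t j := by
      simp only [hN, Finset.card_filter]
      rw [Finset.sum_comm]
      rw [Finset.sum_congr rfl (fun x' hx' => ?_), Finset.sum_const, smul_eq_mul, hBL t]
      rw [hO t j x' hx', Finset.card_filter]
    omega
  -- Step B
  have inner : ∀ x' : B, (Finset.univ.filter (fun pt => Inc x pt ∧ Inc x' pt)).card
      = ∑ j, ((Vo j).filter (fun pt => Inc x pt ∧ Inc x' pt)).card := by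
    intro x'
    set idx : P → Fin n := fun pt => (hVpart pt).choose with hidx
    have hVeq : ∀ j : Fin n, Vo j = Finset.univ.filter (fun pt => idx pt = j) := by
      intro j
      ext pt
      simp only [Finset.mem_filter, Finset.mem_univ, true_and, hidx]
      constructor
      · intro h; exact ((hVpart pt).choose_spec.2 j h).symm
      · rintro rfl; exact (hVpart pt).choose_spec.1
    calc (Finset.univ.filter (fun pt => Inc x pt ∧ Inc x' pt)).card
        = ∑ pt : P, (if Inc x pt ∧ Inc x' pt then 1 else 0) := Finset.card_filter _ _
      _ = ∑ j, ∑ pt ∈ Finset.univ.filter (fun pt => idx pt = j),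
            (if Inc x pt ∧ Inc x' pt then 1 else 0) :=
          (Finset.sum_fiberwise Finset.univ idx _).symm
      _ = ∑ j, ((Vo j).filter (fun pt => Inc x pt ∧ Inc x' pt)).card := by
          refine Finset.sum_congr rfl fun j _ => ?_
          rw [hVeq j, Finset.card_filter]
  have perj : ∀ j : Fin n,
      w * ∑ x' ∈ Bo t, ((Vo j).filter (fun pt => Inc x pt ∧ Inc x' pt)).card
        = O s j * (bL t * O t j) := by
    intro j
    have swap : ∑ x' ∈ Bo t, ((Vo j).filter (fun pt => Inc x pt ∧ Inc x' pt)).card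
        = ∑ pt ∈ (Vo j).filter (fun pt => Inc x pt), N pt := by
      simp only [Finset.card_filter]
      rw [Finset.sum_comm, Finset.sum_filter]
      refine Finset.sum_congr rfl fun pt _ => ?_
      by_cases h : Inc x pt
      · simp only [h, if_true, true_and, hN, Finset.card_filter]
      · simp [h]
    rw [swap, Finset.mul_sum]
    rw [Finset.sum_congr rfl (fun pt hpt => stepA j pt (Finset.mem_filter.mp hpt).1)]
    rw [Finset.sum_const, smul_eq_mul, ← hO s j x hx]
  calc w * ∑ x' ∈ Bo t, (Finset.univ.filter (fun pt => Inc x pt ∧ Inc x' pt)).card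
      = w * ∑ x' ∈ Bo t, ∑ j, ((Vo j).filter (fun pt => Inc x pt ∧ Inc x' pt)).card := by
        rw [Finset.sum_congr rfl fun x' _ => inner x']
    _ = ∑ j, w * ∑ x' ∈ Bo t, ((Vo j).filter (fun pt => Inc x pt ∧ Inc x' pt)).card := by
        rw [Finset.sum_comm, Finset.mul_sum]
    _ = ∑ j, O s j * (bL t * O t j) := Finset.sum_congr rfl fun j _ => perj j
    _ = bL t * ∑ j, O s j * O t j := by
        rw [Finset.mul_sum]; exact Finset.sum_congr rfl fun j _ => by ring

/-- For a weakly self-orthogonal 1-design with k odd and all block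
intersection numbers even, and a group acting with n point orbits of length
w = 2^u·w' and m block orbits of lengths b_i = 2^o·b_i' (w', b_i' odd, o = u), the
rows of [I_m | O] over F_2 span a binary self-orthogonal code of length m + v/w and
dimension m; if m = n the code is self-dual. -/
theorem stmt12 {P B G : Type*} [Fintype P] [Fintype B] [Group G]
    [MulAction G P] [MulAction G B]
    (Inc : B → P → Prop) [∀ x, DecidablePred (Inc x)]
    (hGInc : ∀ (g : G) (x : B) (pt : P), Inc x pt ↔ Inc (g • x) (g • pt))
    (k r : ℕ)
    (hk : ∀ x : B, (Finset.univ.filter (fun pt => Inc x pt)).card = k)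
    (hr : ∀ pt : P, (Finset.univ.filter (fun x => Inc x pt)).card = r)
    (hkodd : Odd k)
    (hint : ∀ x x' : B, x ≠ x' →
      Even (Finset.univ.filter (fun pt => Inc x pt ∧ Inc x' pt)).card)
    (n m w : ℕ) (Vo : Fin n → Finset P) (Bo : Fin m → Finset B) (bL : Fin m → ℕ)
    (hVo : ∀ j, ∃ pt, (Vo j : Set P) = MulAction.orbit G pt)
    (hVpart : ∀ pt : P, ∃! j, pt ∈ Vo j)
    (hVw : ∀ j, (Vo j).card = w)
    (hBo : ∀ i, ∃ x, (Bo i : Set B) = MulAction.orbit G x)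
    (hBpart : ∀ x : B, ∃! i, x ∈ Bo i)
    (hBL : ∀ i, (Bo i).card = bL i)
    (u o w' : ℕ) (b' : Fin m → ℕ)
    (hw : w = 2 ^ u * w') (hw' : Odd w')
    (hb : ∀ i, bL i = 2 ^ o * b' i) (hb' : ∀ i, Odd (b' i))
    (hou : o = u)
    (hnw : n * w = Fintype.card P)
    (O : Matrix (Fin m) (Fin n) ℕ)
    (hO : ∀ i j, ∀ x ∈ Bo i, O i j = ((Vo j).filter (fun pt => Inc x pt)).card)
    (A : Fin m → (Fin m ⊕ Fin n) → ZMod 2)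
    (hA : A = fun i => Sum.elim (fun i' => if i = i' then 1 else 0)
      (fun j => ((O i j : ℕ) : ZMod 2))) :
    (∀ x ∈ Submodule.span (ZMod 2) (Set.range A),
      ∀ y ∈ Submodule.span (ZMod 2) (Set.range A), x ⬝ᵥ y = 0) ∧
    Module.finrank (ZMod 2) (Submodule.span (ZMod 2) (Set.range A)) = m ∧
    (m = n → ∀ z : (Fin m ⊕ Fin n) → ZMod 2,
      z ∈ Submodule.span (ZMod 2) (Set.range A) ↔
        ∀ y ∈ Submodule.span (ZMod 2) (Set.range A), z ⬝ᵥ y = 0) := by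
  classical
  -- generator orthogonality
  have horth : ∀ s t : Fin m, A s ⬝ᵥ A t = 0 := by
    intro s t
    -- pick a block in orbit s
    obtain ⟨x0, hx0⟩ := hBo s
    have hx0m : x0 ∈ Bo s := by
      have : x0 ∈ (Bo s : Set B) := by rw [hx0]; exact MulAction.mem_orbit_self x0
      exact this
    set S : ℕ := ∑ x' ∈ Bo t, (Finset.univ.filter (fun pt => Inc x0 pt ∧ Inc x' pt)).card
      with hS
    set T : ℕ := ∑ j, O s j * O t j with hT
    have hkey : w * S = bL t * T :=
      aux_key Inc hGInc Vo Bo bL hVo hVpart hVw hBo hBL O hO s t x0 hx0m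
    have hcancel : w' * S = b' t * T := by
      have h2 : (2:ℕ) ^ u * (w' * S) = 2 ^ u * (b' t * T) := by
        rw [← mul_assoc, ← mul_assoc, ← hw, ← hou, ← hb]
        exact hkey
      exact Nat.eq_of_mul_eq_mul_left (pow_pos (by norm_num) u) h2
    have hpar : (Even S ↔ Even T) := by
      constructor
      · intro h
        have : Even (b' t * T) := by rw [← hcancel]; exact h.mul_left w'
        rcases Nat.even_mul.mp this with h' | h'
        · exact absurd h' (Nat.not_even_iff_odd.mpr (hb' t))
        · exact h'
      · intro h
        have : Even (w' * S) := by rw [hcancel]; exact h.mul_left (b' t)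
        rcases Nat.even_mul.mp this with h' | h'
        · exact absurd h' (Nat.not_even_iff_odd.mpr hw')
        · exact h'
    -- parity of S
    have hSpar : (s = t → Odd S) ∧ (s ≠ t → Even S) := by
      constructor
      · rintro rfl
        have hsplit : S = ∑ x' ∈ (Bo s).erase x0,
            (Finset.univ.filter (fun pt => Inc x0 pt ∧ Inc x' pt)).card
            + (Finset.univ.filter (fun pt => Inc x0 pt ∧ Inc x0 pt)).card := by
          rw [hS, ← Finset.sum_erase_add _ _ hx0m]
        have hdiag : (Finset.univ.filter (fun pt => Inc x0 pt ∧ Inc x0 pt)).card = k := by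
          rw [← hk x0]
          congr 1
          ext pt
          simp
        have heven : Even (∑ x' ∈ (Bo s).erase x0,
            (Finset.univ.filter (fun pt => Inc x0 pt ∧ Inc x' pt)).card) :=
          Finset.even_sum _ fun x' hx' =>
            hint x0 x' (Ne.symm (Finset.ne_of_mem_erase hx'))
        rw [hsplit, hdiag]
        exact heven.add_odd hkodd
      · intro hst
        rw [hS]
        refine Finset.even_sum _ fun x' hx' => ?_
        apply hint
        intro hxeq
        subst hxeq
        exact hst ((hBpart x0).unique hx0m hx')
    -- compute dot product
    have hdot : A s ⬝ᵥ A t = (if s = t then 1 else 0) + ((T : ℕ) : ZMod 2) := by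
      subst hA
      rw [dotProduct, Fintype.sum_sum_type]
      congr 1
      · by_cases h : s = t
        · subst h
          simp [Finset.sum_ite_eq]
        · simp [Finset.sum_ite_eq, h, fun h' : t = s => h h'.symm]
      · rw [hT]
        push_cast
        rfl
    rw [hdot]
    by_cases h : s = t
    · have hTodd : Odd T := by
        rcases Nat.even_or_odd T with he | ho
        · exact absurd (hpar.mpr he) (Nat.not_even_iff_odd.mpr (hSpar.1 h))
        · exact ho
      rw [ZMod.natCast_eq_one_iff_odd.mpr hTodd, if_pos h]
      decide
    · have hTev : Even T := hpar.mp (hSpar.2 h)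
      rw [ZMod.natCast_eq_zero_iff_even.mpr hTev, if_neg h, add_zero]
  -- span orthogonality
  set W := Submodule.span (ZMod 2) (Set.range A) with hW
  have h1 : ∀ v, v ∈ W → ∀ s : Fin m, A s ⬝ᵥ v = 0 := by
    intro v hv s
    induction hv using Submodule.span_induction with
    | mem y hy => obtain ⟨t, rfl⟩ := hy; exact horth s t
    | zero => simp
    | add y z _ _ hy hz => rw [dotProduct_add, hy, hz, add_zero]
    | smul c y _ hy => rw [dotProduct_smul, hy, smul_zero]
  have part1 : ∀ x ∈ W, ∀ y ∈ W, x ⬝ᵥ y = 0 := by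
    intro x hx y hy
    induction hx using Submodule.span_induction with
    | mem z hz => obtain ⟨s, rfl⟩ := hz; exact h1 y hy s
    | zero => simp
    | add a b _ _ ha hb => rw [add_dotProduct, ha, hb, add_zero]
    | smul c a _ ha => rw [smul_dotProduct, ha, smul_zero]
  -- linear independence and rank
  have hli : LinearIndependent (ZMod 2) A := by
    rw [linearIndependent_iff']
    intro s g hg i hi
    have := congrFun hg (Sum.inl i)
    simp only [Finset.sum_apply, Pi.smul_apply, hA, Sum.elim_inl, smul_eq_mul, mul_ite,
      mul_one, mul_zero, Pi.zero_apply] at this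
    rwa [Finset.sum_ite_eq' s i g, if_pos hi] at this
  have part2 : Module.finrank (ZMod 2) W = m := by
    rw [hW, finrank_span_eq_card hli, Fintype.card_fin]
  refine ⟨part1, part2, ?_⟩
  -- self-duality when m = n
  intro hmn z
  constructor
  · intro hz y hy; exact part1 z hz y hy
  · intro hz
    -- bilinear form given by the dot product
    let Bf : LinearMap.BilinForm (ZMod 2) ((Fin m ⊕ Fin n) → ZMod 2) :=
      LinearMap.mk₂ (ZMod 2) (· ⬝ᵥ ·) (fun a b c => add_dotProduct a b c)
        (fun c a b => smul_dotProduct c a b) (fun a b c => dotProduct_add a b c)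
        (fun c a b => dotProduct_smul c a b)
    have hBf : ∀ a b, Bf a b = a ⬝ᵥ b := fun a b => rfl
    have hrefl : Bf.IsRefl := by
      intro a b hab
      rw [hBf, dotProduct_comm]
      exact hab
    have hnd : Bf.Nondegenerate := by
      refine ⟨fun a ha => ?_, fun a ha => ?_⟩
      · funext i
        have := ha (Pi.single i 1)
        rwa [hBf, dotProduct_single, mul_one] at this
      · funext i
        have := ha (Pi.single i 1)
        rwa [hBf, single_dotProduct, one_mul] at this
    have hle : W ≤ Bf.orthogonal W := by
      intro a ha
      rw [LinearMap.BilinForm.mem_orthogonal_iff]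
      intro y hy
      exact part1 y hy a ha
    have hfr : Module.finrank (ZMod 2) (Bf.orthogonal W) = m := by
      rw [LinearMap.BilinForm.finrank_orthogonal hnd, part2,
        Module.finrank_fintype_fun_eq_card, Fintype.card_sum, Fintype.card_fin,
        Fintype.card_fin, ← hmn]
      omega
    have heq : W = Bf.orthogonal W := by
      apply Submodule.eq_of_le_of_finrank_le hle
      rw [hfr, part2]
    have hzW : z ∈ Bf.orthogonal W := by
      rw [LinearMap.BilinForm.mem_orthogonal_iff]
      intro y hy
      have : y ⬝ᵥ z = 0 := by rw [dotProduct_comm]; exact hz y hy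
      exact this
    rw [heq]
    exact hzW
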